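/- Let φ : X → Y be a continuous surjection between Hausdorff spaces with X locally compact. Then φ is semi-open if and only if the preimage φ⁻¹[A] of every dense subset A of Y is dense in X. -/

import Mathlib

/-- A continuous surjection `g : A → B` is *semi-open* if for every nonempty open set
`U ⊆ A`, the interior of the image `g '' U` is nonempty. -/
def SemiOpen {A B : Type*} [TopologicalSpace A] [TopologicalSpace B] (g : A → B) : Prop :=
  ∀ U : Set A, IsOpen U → U.Nonempty → (interior (g '' U)).Nonempty

/-- Lemma 2(a). A continuous surjection `φ : X → Y` of Hausdorff spaces with `X` locally
compact is semi-open iff the preimage of every dense subset of `Y` is dense in `X`. -/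
theorem semiOpen_iff_preimage_dense
    {X Y : Type*} [TopologicalSpace X] [T2Space X] [LocallyCompactSpace X]
    [TopologicalSpace Y] [T2Space Y]
    {φ : X → Y} (hc : Continuous φ) (hs : Function.Surjective φ) :
    SemiOpen φ ↔ ∀ A : Set Y, Dense A → Dense (φ ⁻¹' A) := by
  constructor
  · intro hso A hA
    rw [dense_iff_inter_open]
    intro U hU hUne
    obtain ⟨y, hy⟩ := hso U hU hUne
    obtain ⟨z, hzI, hzA⟩ := (dense_iff_inter_open.mp hA) (interior (φ '' U)) isOpen_interior ⟨y, hy⟩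
    obtain ⟨x, hxU, hxz⟩ := interior_subset hzI
    exact ⟨x, hxU, show φ x ∈ A from hxz ▸ hzA⟩
  · intro h U hU hUne
    obtain ⟨x, hxU⟩ := hUne
    obtain ⟨K, hKmem, hKU, hKc⟩ := local_compact_nhds (hU.mem_nhds hxU)
    by_contra hempty
    rw [Set.not_nonempty_iff_eq_empty] at hempty
    have hKcl : IsClosed (φ '' K) := (hKc.image hc).isClosed
    have hdense : Dense ((φ '' K)ᶜ) := by
      rw [dense_iff_inter_open]
      intro V hV hVne
      rcases (Set.eq_empty_or_nonempty (V ∩ (φ '' K)ᶜ)) with he | hne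
      · exfalso
        have hVsub : V ⊆ φ '' K := by
          intro v hv
          by_contra hvn
          exact Set.eq_empty_iff_forall_notMem.mp he v ⟨hv, hvn⟩
        have : V ⊆ interior (φ '' U) :=
          interior_maximal (hVsub.trans (Set.image_mono hKU)) hV
        obtain ⟨v, hv⟩ := hVne
        exact Set.eq_empty_iff_forall_notMem.mp hempty v (this hv)
      · obtain ⟨v, hv1, hv2⟩ := hne
        exact ⟨v, hv1, hv2⟩
    have hd := h _ hdense
    obtain ⟨z, hz1, hz2⟩ := dense_iff_inter_open.mp hd (interior K) isOpen_interior
      ⟨x, mem_interior_iff_mem_nhds.mpr hKmem⟩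
    exact hz2 ⟨z, interior_subset hz1, rfl⟩
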